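/- With the sequence a_k as above (a₁ = 30/47; a_k = 0 on (48ⁿ, 12·48ⁿ], a_k = 1 on (12·48ⁿ, 36·48ⁿ], a_k = 1/2 on (36·48ⁿ, 48^{n+1}]), one has limsup_{n→∞} (1/n) Σ_{k=1}^{n} a_k = 193/282. -/

import Mathlib

theorem stmt13 (a : ℕ → ℝ) (hrange : ∀ k, 0 ≤ a k ∧ a k ≤ 1)
    (h1 : a 1 = 30 / 47)
    (h0 : ∀ n k : ℕ, 48 ^ n < k → k ≤ 12 * 48 ^ n → a k = 0)
    (hone : ∀ n k : ℕ, 12 * 48 ^ n < k → k ≤ 36 * 48 ^ n → a k = 1)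
    (hhalf : ∀ n k : ℕ, 36 * 48 ^ n < k → k ≤ 48 * 48 ^ n → a k = 1 / 2) :
    Filter.atTop.limsup (fun n : ℕ => (1 / (n : ℝ)) * ∑ k ∈ Finset.Icc 1 n, a k)
      = 193 / 282 := by
  have hsplit : ∀ m M : ℕ, m ≤ M →
      ∑ k ∈ Finset.Icc 1 M, a k = (∑ k ∈ Finset.Icc 1 m, a k) + ∑ k ∈ Finset.Ioc m M, a k := by
    intro m M h
    rw [show (1:ℕ) = 0+1 from rfl, Finset.Icc_add_one_left_eq_Ioc, Finset.Icc_add_one_left_eq_Ioc]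
    exact (Finset.sum_Ioc_consecutive _ (Nat.zero_le m) h).symm
  have hblock : ∀ (c : ℝ) (m M : ℕ), (∀ k, m < k → k ≤ M → a k = c) →
      ∑ k ∈ Finset.Ioc m M, a k = c * ((M : ℝ) - m) ∨ M ≤ m := by
    intro c m M h
    by_cases hmM : m ≤ M
    · left
      rw [Finset.sum_congr rfl (fun k hk => h k (Finset.mem_Ioc.1 hk).1 (Finset.mem_Ioc.1 hk).2),
          Finset.sum_const, Nat.card_Ioc, nsmul_eq_mul, mul_comm, Nat.cast_sub hmM]
    · right; omega
  -- generic block sum for m ≤ M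
  have hblock' : ∀ (c : ℝ) (m M : ℕ), m ≤ M → (∀ k, m < k → k ≤ M → a k = c) →
      ∑ k ∈ Finset.Ioc m M, a k = c * ((M : ℝ) - m) := by
    intro c m M hm h
    rw [Finset.sum_congr rfl (fun k hk => h k (Finset.mem_Ioc.1 hk).1 (Finset.mem_Ioc.1 hk).2),
        Finset.sum_const, Nat.card_Ioc, nsmul_eq_mul, mul_comm, Nat.cast_sub hm]
  have hpow : ∀ n : ℕ, (1:ℕ) ≤ 48 ^ n := fun n => Nat.one_le_pow _ _ (by norm_num)
  -- value at 48^n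
  have hA : ∀ n : ℕ, ∑ k ∈ Finset.Icc 1 (48 ^ n), a k = 30 / 47 * 48 ^ n := by
    intro n
    induction n with
    | zero => simpa using h1
    | succ n ih =>
      have l1 : (48:ℕ)^n ≤ 12 * 48^n := by nlinarith [hpow n]
      have l2 : (12:ℕ) * 48^n ≤ 36 * 48^n := by nlinarith [hpow n]
      have l3 : (36:ℕ) * 48^n ≤ 48 * 48^n := by nlinarith [hpow n]
      have e48 : (48:ℕ)^(n+1) = 48 * 48^n := by ring
      rw [e48, hsplit (36*48^n) (48*48^n) l3, hsplit (12*48^n) (36*48^n) l2,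
          hsplit (48^n) (12*48^n) l1, ih,
          hblock' 0 _ _ l1 (fun k hk hk' => h0 n k hk hk'),
          hblock' 1 _ _ l2 (fun k hk hk' => hone n k hk hk'),
          hblock' (1/2) _ _ l3 (fun k hk hk' => hhalf n k hk hk')]
      push_cast
      ring
  -- value at 36·48^n
  have hB : ∀ n : ℕ, ∑ k ∈ Finset.Icc 1 (36 * 48 ^ n), a k = 30 / 47 * 48 ^ n + 24 * 48 ^ n := by
    intro n
    have l1 : (48:ℕ)^n ≤ 12 * 48^n := by nlinarith [hpow n]
    have l2 : (12:ℕ) * 48^n ≤ 36 * 48^n := by nlinarith [hpow n]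
    rw [hsplit (12*48^n) (36*48^n) l2, hsplit (48^n) (12*48^n) l1, hA,
        hblock' 0 _ _ l1 (fun k hk hk' => h0 n k hk hk'),
        hblock' 1 _ _ l2 (fun k hk hk' => hone n k hk hk')]
    push_cast
    ring
  -- global upper bound
  have hub : ∀ N : ℕ, ∑ k ∈ Finset.Icc 1 N, a k ≤ 193 / 282 * N := by
    intro N
    rcases Nat.eq_zero_or_pos N with h | hN1
    · subst h; simp
    set n := Nat.log 48 N with hn
    have hlow : 48 ^ n ≤ N := Nat.pow_log_le_self 48 (by omega)
    have hhigh : N < 48 ^ (n+1) := Nat.lt_pow_succ_log_self (by norm_num) N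
    have e48 : (48:ℕ)^(n+1) = 48 * 48^n := by ring
    rw [e48] at hhigh
    have hxr : (1:ℝ) ≤ (48:ℝ)^n := one_le_pow₀ (by norm_num)
    rcases eq_or_lt_of_le hlow with heq | hlt
    · rw [← heq, hA]
      have : ((48:ℕ)^n : ℝ) = (48:ℝ)^n := by push_cast; ring
      rw [← heq] at *
      push_cast
      nlinarith [hxr]
    · -- 48^n < N
      have hNr : ((48:ℝ)^n) < (N:ℝ) := by exact_mod_cast hlt
      by_cases c1 : N ≤ 12 * 48^n
      · rw [hsplit (48^n) N (le_of_lt hlt), hA,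
            hblock' 0 _ _ (le_of_lt hlt) (fun k hk hk' => h0 n k hk (le_trans hk' c1))]
        nlinarith [hNr, hxr]
      · push_neg at c1
        by_cases c2 : N ≤ 36 * 48^n
        · have l1 : (48:ℕ)^n ≤ 12 * 48^n := by nlinarith [hpow n]
          rw [hsplit (12*48^n) N (le_of_lt c1), hsplit (48^n) (12*48^n) l1, hA,
              hblock' 0 _ _ l1 (fun k hk hk' => h0 n k hk hk'),
              hblock' 1 _ _ (le_of_lt c1) (fun k hk hk' => hone n k hk (le_trans hk' c2))]
          have hc2r : (N:ℝ) ≤ 36 * 48^n := by exact_mod_cast c2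
          have hc1r : (12:ℝ) * 48^n < N := by exact_mod_cast c1
          push_cast
          nlinarith [hxr]
        · push_neg at c2
          have c3 : N ≤ 48 * 48^n := le_of_lt hhigh
          rw [hsplit (36*48^n) N (le_of_lt c2), hB,
              hblock' (1/2) _ _ (le_of_lt c2) (fun k hk hk' => hhalf n k hk (le_trans hk' c3))]
          have hc2r : (36:ℝ) * 48^n < N := by exact_mod_cast c2
          push_cast
          nlinarith [hxr]
  set u : ℕ → ℝ := fun N => (1 / (N : ℝ)) * ∑ k ∈ Finset.Icc 1 N, a k with hu
  have hlb : ∀ N, 0 ≤ u N := by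
    intro N
    apply mul_nonneg (by positivity)
    exact Finset.sum_nonneg fun k _ => (hrange k).1
  have hub' : ∀ N, u N ≤ 193 / 282 := by
    intro N
    rcases Nat.eq_zero_or_pos N with h | hN1
    · subst h; simp [hu]; norm_num
    have hNr : (0:ℝ) < N := by exact_mod_cast hN1
    have := hub N
    calc u N ≤ (1 / (N:ℝ)) * (193/282 * N) := by
          apply mul_le_mul_of_nonneg_left (hub N) (by positivity)
      _ = 193/282 := by field_simp
  have hval : ∀ n : ℕ, u (36 * 48 ^ n) = 193 / 282 := by
    intro n
    have hx : (0:ℝ) < (48:ℝ)^n := by positivity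
    simp only [hu]
    rw [hB n]
    push_cast
    field_simp
    ring
  apply le_antisymm
  · apply Filter.limsup_le_of_le
    · exact (Filter.isBoundedUnder_of ⟨0, fun N => hlb N⟩ :
        Filter.IsBoundedUnder (· ≥ ·) Filter.atTop u).isCoboundedUnder_le
    · exact Filter.Eventually.of_forall hub'
  · apply Filter.le_limsup_of_frequently_le
    · rw [Filter.frequently_atTop]
      intro b
      refine ⟨36 * 48 ^ b, ?_, (hval b).ge⟩
      calc b ≤ 48 ^ b := (Nat.lt_pow_self (n := b) (a := 48) (by norm_num)).le
        _ ≤ 36 * 48 ^ b := Nat.le_mul_of_pos_left _ (by norm_num)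
    · exact Filter.isBoundedUnder_of ⟨193/282, fun N => hub' N⟩
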